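/- For every t ≥ 0, the eigenvalues of the 4×4 matrix Ω̃(t) (defined below) are v₁(t) = 1 - e^{-t/2}(t/2 - √(1+(t/2)²)), v₂(t) = 1 - e^{-t/2}(t/2 + √(1+(t/2)²)), v₃(t) = 1 + e^{-t/2}(t/2 - √(1+(t/2)²)), v₄(t) = 1 + e^{-t/2}(t/2 + √(1+(t/2)²)); more precisely P(t)·Ω̃(t)·P(t)⁻¹ = diag(v₁(t), v₂(t), v₃(t), v₄(t)), where P(t) is the explicit orthogonal matrix built from b₊(t) = √(1+a(t)), b₋(t) = √(1-a(t)) with a(t) = (1-t/2)/√(1+(t/2)²). -/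

import Mathlib

open Matrix

set_option maxHeartbeats 1000000 in
/-- Diagonalization of `Ω̃(t)`: `P(t)·Ω̃(t)·P(t)⁻¹ = diag(v₁(t), v₂(t), v₃(t), v₄(t))`. -/
theorem stmt9 (a bp bm v₁ v₂ v₃ v₄ : ℝ → ℝ)
    (ha : ∀ t : ℝ, a t = (1 - t / 2) / Real.sqrt (1 + (t / 2) ^ 2))
    (hbp : ∀ t : ℝ, bp t = Real.sqrt (1 + a t))
    (hbm : ∀ t : ℝ, bm t = Real.sqrt (1 - a t))
    (hv₁ : ∀ t : ℝ, v₁ t = 1 - Real.exp (-t / 2) * (t / 2 - Real.sqrt (1 + (t / 2) ^ 2)))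
    (hv₂ : ∀ t : ℝ, v₂ t = 1 - Real.exp (-t / 2) * (t / 2 + Real.sqrt (1 + (t / 2) ^ 2)))
    (hv₃ : ∀ t : ℝ, v₃ t = 1 + Real.exp (-t / 2) * (t / 2 - Real.sqrt (1 + (t / 2) ^ 2)))
    (hv₄ : ∀ t : ℝ, v₄ t = 1 + Real.exp (-t / 2) * (t / 2 + Real.sqrt (1 + (t / 2) ^ 2)))
    (P Ω : ℝ → Matrix (Fin 4) (Fin 4) ℝ)
    (hP : ∀ t : ℝ, P t = (1 / 2 : ℝ) •
      !![bm t, -bm t, -bp t, -bp t;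
         bp t, -bp t, bm t, bm t;
         bm t, bm t, -bp t, bp t;
         bp t, bp t, bm t, -bm t])
    (hΩ : ∀ t : ℝ, Ω t =
      !![1, Real.exp (-t / 2), 0, -(Real.sqrt t * Real.exp (-t / 2));
         Real.exp (-t / 2), 1, Real.sqrt t * Real.exp (-t / 2), 0;
         0, Real.sqrt t * Real.exp (-t / 2), 1, (1 - t) * Real.exp (-t / 2);
         -(Real.sqrt t * Real.exp (-t / 2)), 0, (1 - t) * Real.exp (-t / 2), 1]) :
    ∀ t : ℝ, 0 ≤ t →
      P t * Ω t * (P t)⁻¹ = Matrix.diagonal ![v₁ t, v₂ t, v₃ t, v₄ t] := by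
  intro t ht
  have hs2 : Real.sqrt (1 + (t / 2) ^ 2) ^ 2 = 1 + (t / 2) ^ 2 :=
    Real.sq_sqrt (by positivity)
  have hspos : 0 < Real.sqrt (1 + (t / 2) ^ 2) := Real.sqrt_pos.mpr (by positivity)
  have hr2 : Real.sqrt t ^ 2 = t := Real.sq_sqrt ht
  have hrnn : 0 ≤ Real.sqrt t := Real.sqrt_nonneg t
  have hs1 : 1 ≤ Real.sqrt (1 + (t / 2) ^ 2) := by nlinarith
  have hst : t / 2 ≤ Real.sqrt (1 + (t / 2) ^ 2) := by nlinarith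
  have hat : a t = (1 - t / 2) / Real.sqrt (1 + (t / 2) ^ 2) := ha t
  have ha1 : a t ≤ 1 := by
    rw [hat, div_le_one hspos]; linarith
  have ham : -1 ≤ a t := by
    rw [hat, le_div_iff₀ hspos]; nlinarith
  have hbp2 : bp t ^ 2 = 1 + a t := by rw [hbp t]; exact Real.sq_sqrt (by linarith)
  have hbm2 : bm t ^ 2 = 1 - a t := by rw [hbm t]; exact Real.sq_sqrt (by linarith)
  have hsum : bp t ^ 2 + bm t ^ 2 = 2 := by rw [hbp2, hbm2]; ring
  have hc1 : (0 : ℝ) ≤ 1 - t / 2 + Real.sqrt (1 + (t / 2) ^ 2) := by linarith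
  have hc2 : (0 : ℝ) ≤ Real.sqrt (1 + (t / 2) ^ 2) + t / 2 - 1 := by linarith
  have key1sq : (1 + a t) * t = (1 - a t) * (1 - t / 2 + Real.sqrt (1 + (t / 2) ^ 2)) ^ 2 := by
    rw [hat]
    generalize hSS : Real.sqrt (1 + (t / 2) ^ 2) = S at hs2 hspos ⊢
    field_simp
    linear_combination (-8 * S - 8 + 4 * t) * hs2
  have key2sq : (1 - a t) * t = (1 + a t) * (Real.sqrt (1 + (t / 2) ^ 2) + t / 2 - 1) ^ 2 := by
    rw [hat]
    generalize hSS : Real.sqrt (1 + (t / 2) ^ 2) = S at hs2 hspos ⊢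
    field_simp
    linear_combination (-8 * S + 8 - 4 * t) * hs2
  have hK1 : bp t * Real.sqrt t = bm t * (1 - t / 2 + Real.sqrt (1 + (t / 2) ^ 2)) := by
    rw [hbp t, hbm t, ← Real.sqrt_mul (by linarith) t, ← Real.sqrt_sq hc1,
      ← Real.sqrt_mul (by linarith), key1sq]
  have hK2 : bm t * Real.sqrt t = bp t * (Real.sqrt (1 + (t / 2) ^ 2) + t / 2 - 1) := by
    rw [hbp t, hbm t, ← Real.sqrt_mul (by linarith : (0:ℝ) ≤ 1 - a t) t,
      ← Real.sqrt_sq hc2, ← Real.sqrt_mul (by linarith : (0:ℝ) ≤ 1 + a t), key2sq]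
  have horth : P t * (P t)ᵀ = 1 := by
    rw [hP t]
    ext i j
    fin_cases i <;> fin_cases j <;>
      simp [Matrix.mul_apply, Fin.sum_univ_four, Matrix.one_apply, Matrix.transpose_apply, Matrix.vecHead, Matrix.vecTail] <;>
      first
        | ring1
        | linear_combination hsum / 2
  have hPinv : (P t)⁻¹ = (P t)ᵀ := Matrix.inv_eq_right_inv horth
  have hmain : P t * Ω t = Matrix.diagonal ![v₁ t, v₂ t, v₃ t, v₄ t] * P t := by
    rw [hP t, hΩ t]
    ext i j
    fin_cases i <;> fin_cases j <;>
      simp [Matrix.mul_apply, Fin.sum_univ_four, Matrix.diagonal, hv₁ t, hv₂ t, hv₃ t, hv₄ t] <;>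
      first
        | ring1
        | linear_combination (Real.exp (-t / 2) / 2) * hK1
        | linear_combination (-(Real.exp (-t / 2) / 2)) * hK1
        | linear_combination (Real.exp (-t / 2) / 2) * hK2
        | linear_combination (-(Real.exp (-t / 2) / 2)) * hK2
  calc P t * Ω t * (P t)⁻¹
      = Matrix.diagonal ![v₁ t, v₂ t, v₃ t, v₄ t] * P t * (P t)ᵀ := by rw [hmain, hPinv]
    _ = Matrix.diagonal ![v₁ t, v₂ t, v₃ t, v₄ t] * (P t * (P t)ᵀ) := by
        rw [Matrix.mul_assoc]
    _ = Matrix.diagonal ![v₁ t, v₂ t, v₃ t, v₄ t] := by rw [horth, Matrix.mul_one]
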